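/- Let φ satisfy φ'(x) = Φ(x, φ(x)) with Φ ∈ ℤ[X,Y], and let G ∈ ℤ[X,Y] be irreducible with G̃ = ∂G/∂X + (∂G/∂Y)Φ not divisible by G, so that R := Res_Y(G, G̃) ∈ ℤ[X] is nonzero. If g(x) = G(x, φ(x)) is not identically zero and α is a zero of g of multiplicity ≥ 2, then mult(α, g) ≤ mult(α, R) + 1. -/

import Mathlib

open Polynomial Filter

private lemma iteratedDeriv_eq_coeff {f : ℝ → ℝ} {p : FormalMultilinearSeries ℝ ℝ ℝ} {α : ℝ}
    (h : HasFPowerSeriesAt f p α) (n : ℕ) :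
    iteratedDeriv n f α = (n.factorial : ℝ) * p.coeff n := by
  obtain ⟨r, hr⟩ := h
  have h1 := hr.factorial_smul (1 : ℝ) n
  rw [iteratedDeriv_eq_iteratedFDeriv, ← h1, FormalMultilinearSeries.apply_eq_prod_smul_coeff]
  simp [nsmul_eq_mul]

private lemma factor_of_vanish {α : ℝ} :
    ∀ (N : ℕ) (f : ℝ → ℝ), AnalyticAt ℝ f α → (∀ k < N, iteratedDeriv k f α = 0) →
    ∃ w : ℝ → ℝ, AnalyticAt ℝ w α ∧ ∀ z, f z = (z - α) ^ N * w z := by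
  intro N
  induction N with
  | zero => exact fun f hf _ => ⟨f, hf, by simp⟩
  | succ N ih =>
    intro f hf hv
    obtain ⟨p, hp⟩ := hf
    have h0 : f α = 0 := by simpa [iteratedDeriv_zero] using hv 0 (Nat.succ_pos N)
    have hd : AnalyticAt ℝ (dslope f α) α := ⟨p.fslope, hp.has_fpower_series_dslope_fslope⟩
    have hdv : ∀ k < N, iteratedDeriv k (dslope f α) α = 0 := by
      intro k hk
      rw [iteratedDeriv_eq_coeff hp.has_fpower_series_dslope_fslope,
        FormalMultilinearSeries.coeff_fslope]
      have h2 := hv (k + 1) (by omega)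
      rw [iteratedDeriv_eq_coeff hp] at h2
      have hfac : ((k + 1).factorial : ℝ) ≠ 0 :=
        Nat.cast_ne_zero.mpr (Nat.factorial_ne_zero _)
      have : p.coeff (k + 1) = 0 := by
        rcases mul_eq_zero.mp h2 with h | h
        · exact absurd h hfac
        · exact h
      simp [this]
    obtain ⟨w, hw, hwe⟩ := ih (dslope f α) hd hdv
    refine ⟨w, hw, fun z => ?_⟩
    have h3 := sub_smul_dslope f α z
    rw [h0, sub_zero, smul_eq_mul] at h3
    rw [← h3, hwe z]; ring

private lemma vanish_of_factor {α : ℝ} :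
    ∀ (N : ℕ) (w : ℝ → ℝ), AnalyticAt ℝ w α →
    ∀ k < N, iteratedDeriv k (fun z => (z - α) ^ N * w z) α = 0 := by
  intro N
  induction N with
  | zero => exact fun w _ k hk => absurd hk (Nat.not_lt_zero k)
  | succ N ih =>
    intro w hw k hk
    have hw' : AnalyticAt ℝ (deriv w) α := by
      have h1 : AnalyticOnNhd ℝ w {y | AnalyticAt ℝ w y} := fun y hy => hy
      exact h1.deriv α hw
    match k with
    | 0 => simp [iteratedDeriv_zero]
    | (k + 1) =>
      rw [iteratedDeriv_succ']
      have heq : deriv (fun z => (z - α) ^ (N + 1) * w z)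
          =ᶠ[nhds α] fun z => (z - α) ^ N * ((N + 1 : ℝ) * w z + (z - α) * deriv w z) := by
        filter_upwards [hw.eventually_analyticAt] with z hz
        have h1 := (((hasDerivAt_id z).sub_const α).pow (N + 1)).mul
          hz.differentiableAt.hasDerivAt
        simp only [id_eq] at h1
        rw [show (fun z => (z - α) ^ (N + 1) * w z) = ((fun x => x - α) ^ (N + 1) * w) from rfl,
          h1.deriv]
        simp only [Nat.add_sub_cancel, Pi.pow_apply]
        push_cast
        ring
      rw [heq.iteratedDeriv_eq]
      have hcomb : AnalyticAt ℝ (fun z => (N + 1 : ℝ) * w z + (z - α) * deriv w z) α :=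
        ((analyticAt_const.mul hw).add (((analyticAt_id).sub analyticAt_const).mul hw'))
      exact ih _ hcomb k (by omega)

private lemma iteratedDeriv_polyeval (k : ℕ) :
    ∀ (p : Polynomial ℝ) (x : ℝ),
      iteratedDeriv k (fun y => p.eval y) x = (Polynomial.derivative^[k] p).eval x := by
  induction k with
  | zero => intro p x; simp
  | succ k ih =>
    intro p x
    rw [iteratedDeriv_succ']
    have h1 : deriv (fun y => p.eval y) = fun y => p.derivative.eval y := by
      funext y; exact Polynomial.deriv (𝕜 := ℝ) p
    rw [h1, ih, Function.iterate_succ_apply]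

private lemma aeval_analytic (U : Set ℝ) (φ : ℝ → ℝ) (hφan : AnalyticOnNhd ℝ φ U)
    (P : MvPolynomial (Fin 2) ℤ) :
    AnalyticOnNhd ℝ (fun x => MvPolynomial.aeval ![x, φ x] P) U := by
  induction P using MvPolynomial.induction_on with
  | C a => simpa using analyticOnNhd_const
  | add p q hp hq => simpa only [map_add, Pi.add_def] using hp.add hq
  | mul_X p i hp =>
    simp only [map_mul, MvPolynomial.aeval_X]
    apply hp.mul
    fin_cases i
    · simpa using analyticOnNhd_id
    · simpa using hφan

private lemma aeval_hasDerivAt (U : Set ℝ) (φ : ℝ → ℝ) (Φ : MvPolynomial (Fin 2) ℤ)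
    (hφ : ∀ x ∈ U, HasDerivAt φ (MvPolynomial.aeval ![x, φ x] Φ) x)
    (P : MvPolynomial (Fin 2) ℤ) (x : ℝ) (hx : x ∈ U) :
    HasDerivAt (fun x => MvPolynomial.aeval ![x, φ x] P)
      (MvPolynomial.aeval ![x, φ x]
        (MvPolynomial.pderiv 0 P + MvPolynomial.pderiv 1 P * Φ)) x := by
  induction P using MvPolynomial.induction_on with
  | C a => simpa using hasDerivAt_const x _
  | add p q hp hq =>
    simp only [map_add, map_mul]
    refine (hp.fun_add hq).congr_deriv ?_
    simp only [map_add, map_mul]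
    ring
  | mul_X p i hp =>
    fin_cases i
    · simp only [map_mul, MvPolynomial.aeval_X, Matrix.cons_val_zero]
      refine (hp.fun_mul (hasDerivAt_id x)).congr_deriv ?_
      simp [MvPolynomial.pderiv_mul, MvPolynomial.pderiv_X_self,
        MvPolynomial.pderiv_X_of_ne (show (1 : Fin 2) ≠ 0 by decide),
        map_add, map_mul]
      ring
    · simp only [map_mul, MvPolynomial.aeval_X, Matrix.cons_val_one, Matrix.head_cons]
      refine (hp.fun_mul (hφ x hx)).congr_deriv ?_
      simp [MvPolynomial.pderiv_mul, MvPolynomial.pderiv_X_self,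
        MvPolynomial.pderiv_X_of_ne (show (0 : Fin 2) ≠ 1 by decide),
        map_add, map_mul]
      ring

/-- Multiplicity of `α` as a zero of an analytic function `g`:
the least `r` with `g^{(r)}(α) ≠ 0`. -/
noncomputable def amult (g : ℝ → ℝ) (α : ℝ) : ℕ :=
  sInf {r | iteratedDeriv r g α ≠ 0}

theorem stmt_6 (Φ G : MvPolynomial (Fin 2) ℤ) (hGirr : Irreducible G)
    (hdiv : ¬ G ∣ (MvPolynomial.pderiv 0 G + MvPolynomial.pderiv 1 G * Φ))
    (R : Polynomial ℤ) (hR : R ≠ 0) (S T : MvPolynomial (Fin 2) ℤ)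
    (hres : Polynomial.aeval (MvPolynomial.X 0) R
      = S * G + T * (MvPolynomial.pderiv 0 G + MvPolynomial.pderiv 1 G * Φ))
    (U : Set ℝ) (hU : IsOpen U) (φ : ℝ → ℝ) (hφan : AnalyticOnNhd ℝ φ U)
    (hφ : ∀ x ∈ U, HasDerivAt φ (MvPolynomial.aeval ![x, φ x] Φ) x)
    (g : ℝ → ℝ) (hg : g = fun x => MvPolynomial.aeval ![x, φ x] G)
    (hgne : ∃ x ∈ U, g x ≠ 0)
    (α : ℝ) (hα : α ∈ U) (h0 : g α = 0) (hmult : 2 ≤ amult g α) :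
    amult g α ≤ (R.map (Int.castRingHom ℝ)).rootMultiplicity α + 1 := by
  set m := amult g α with hm
  set Gt := MvPolynomial.pderiv 0 G + MvPolynomial.pderiv 1 G * Φ with hGt
  set sf : ℝ → ℝ := fun x => MvPolynomial.aeval ![x, φ x] S with hsf
  set tf : ℝ → ℝ := fun x => MvPolynomial.aeval ![x, φ x] T with htf
  set gt : ℝ → ℝ := fun x => MvPolynomial.aeval ![x, φ x] Gt with hgt
  set Rr := R.map (Int.castRingHom ℝ) with hRr
  obtain ⟨n, hn⟩ : ∃ n, m = n + 1 := ⟨m - 1, by omega⟩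
  -- analyticity
  have hgan : AnalyticOnNhd ℝ g U := by rw [hg]; exact aeval_analytic U φ hφan G
  have hsan : AnalyticAt ℝ sf α := aeval_analytic U φ hφan S α hα
  have htan : AnalyticAt ℝ tf α := aeval_analytic U φ hφan T α hα
  have hgtan : AnalyticAt ℝ gt α := aeval_analytic U φ hφan Gt α hα
  -- derivative of g
  have hg' : ∀ x ∈ U, HasDerivAt g (gt x) x := by
    intro x hx
    rw [hg]
    exact aeval_hasDerivAt U φ Φ hφ G x hx
  -- vanishing of iterated derivatives of g
  have hmg : ∀ k < m, iteratedDeriv k g α = 0 := by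
    intro k hk
    have := Nat.notMem_of_lt_sInf (s := {r | iteratedDeriv r g α ≠ 0}) hk
    simpa using this
  -- vanishing of iterated derivatives of gt
  have hmgt : ∀ k < n, iteratedDeriv k gt α = 0 := by
    intro k hk
    have heq : gt =ᶠ[nhds α] deriv g := by
      filter_upwards [hU.mem_nhds hα] with x hx
      exact ((hg' x hx).deriv).symm
    rw [heq.iteratedDeriv_eq, ← iteratedDeriv_succ']
    exact hmg (k + 1) (by omega)
  -- the resultant identity as functions
  have heq : ∀ x : ℝ, Rr.eval x = sf x * g x + tf x * gt x := by
    intro x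
    have h1 : (MvPolynomial.aeval ![x, φ x] : MvPolynomial (Fin 2) ℤ →ₐ[ℤ] ℝ)
        (Polynomial.aeval (MvPolynomial.X 0) R)
        = Polynomial.aeval (MvPolynomial.aeval ![x, φ x] (MvPolynomial.X 0) : ℝ) R :=
      (Polynomial.aeval_algHom_apply _ _ _).symm
    rw [hres] at h1
    simp only [map_add, map_mul, MvPolynomial.aeval_X, Matrix.cons_val_zero] at h1
    rw [Polynomial.aeval_def, algebraMap_int_eq] at h1
    rw [hRr, Polynomial.eval_map, ← h1, hg]
  -- factor g and gt
  obtain ⟨w1, hw1an, hw1⟩ := factor_of_vanish m g (hgan α hα) hmg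
  obtain ⟨w2, hw2an, hw2⟩ := factor_of_vanish n gt hgtan hmgt
  -- vanishing of iterated derivatives of Rr.eval
  have hRvan : ∀ k < n, (Polynomial.derivative^[k] Rr).eval α = 0 := by
    intro k hk
    rw [← iteratedDeriv_polyeval]
    have hfun : (fun x => Rr.eval x)
        = fun z => (z - α) ^ n * ((z - α) * sf z * w1 z + tf z * w2 z) := by
      funext z
      rw [heq z, hw1 z, hw2 z, hn, pow_succ]
      ring
    rw [hfun]
    refine vanish_of_factor n _ ?_ k hk
    exact ((((analyticAt_id).sub analyticAt_const).mul hsan).mul hw1an).add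
      (htan.mul hw2an)
  -- conclude via rootMultiplicity
  have hRrne : Rr ≠ 0 := by
    rw [hRr]
    exact (Polynomial.map_ne_zero_iff (Int.cast_injective)).mpr hR
  have hlt : n - 1 < Rr.rootMultiplicity α := by
    refine Polynomial.lt_rootMultiplicity_of_isRoot_iterate_derivative_of_mem_nonZeroDivisors
      hRrne (fun j hj => hRvan j (by omega)) ?_
    exact mem_nonZeroDivisors_of_ne_zero
      (Nat.cast_ne_zero.mpr (Nat.factorial_ne_zero _))
  omega
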